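/- Let ν > 0 and define ρ_ν(t) = (1/t)·∫_0^∞ y^{1−ν}·e^{−(1+y²)/(2t)}·I_ν(y/t) dy for t > 0. Then lim_{t→∞} t^ν·ρ_ν(t) = 1/(2^ν·Γ(1+ν)), i.e. ρ_ν(t) ∼ 1/(t^ν·2^ν·Γ(1+ν)) as t → ∞. -/

import Mathlib

open MeasureTheory Real Filter Set Topology

/-- The modified Bessel function of the first kind, defined by its series:
`I_ν(y) = Σ_{j=0}^∞ (y/2)^{ν+2j} / (j!·Γ(ν+j+1))`. -/
noncomputable def besselI (ν y : ℝ) : ℝ :=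
  ∑' j : ℕ, (y / 2) ^ (ν + 2 * (j : ℝ)) / ((Nat.factorial j : ℝ) * Real.Gamma (ν + (j : ℝ) + 1))

/-- The explicit integral formula for the Bessel(δ) call price, `δ = 2ν+2`, strike `K = k^{−2ν}`:
`r_{ν,k}(t) = ν·k^{−ν}·∫_0^{k/t} y^{−1}·e^{−y/(2k)}·[ y^ν/(2^ν Γ(1+ν)) − e^{−ky/2}·I_ν(y) ] dy`. -/
noncomputable def rBes (ν k t : ℝ) : ℝ :=
  ν * k ^ (-ν) *
    ∫ y in (0:ℝ)..(k / t),
      y⁻¹ * Real.exp (-y / (2 * k)) *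
        (y ^ ν / ((2:ℝ) ^ ν * Real.Gamma (1 + ν)) - Real.exp (-(k * y) / 2) * besselI ν y)

/-- `ρ_ν(t) = (1/t)·∫_0^∞ y^{1−ν}·e^{−(1+y²)/(2t)}·I_ν(y/t) dy`, the expectation
`E_1^{(δ)}[R_t^{−(δ−2)}]` for the Bessel(δ) process started at 1, δ = 2ν+2. -/
noncomputable def rhoNu (ν t : ℝ) : ℝ :=
  (1 / t) *
    ∫ y in Set.Ioi (0:ℝ), y ^ (1 - ν) * Real.exp (-(1 + y ^ 2) / (2 * t)) * besselI ν (y / t)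


lemma Gamma_nu_le (ν : ℝ) (hν : 0 < ν) (j : ℕ) :
    Real.Gamma (ν + 1) ≤ Real.Gamma (ν + j + 1) := by
  induction j with
  | zero => simp
  | succ n ih =>
    have hn : (0:ℝ) ≤ n := Nat.cast_nonneg n
    have h1 : (0:ℝ) < ν + n + 1 := by linarith
    have h2 : Real.Gamma (ν + (n + 1 : ℕ) + 1) = (ν + n + 1) * Real.Gamma (ν + n + 1) := by
      push_cast
      rw [show ν + ((n:ℝ) + 1) + 1 = (ν + n + 1) + 1 by ring, Real.Gamma_add_one h1.ne']
    rw [h2]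
    calc Real.Gamma (ν + 1) ≤ Real.Gamma (ν + n + 1) := ih
      _ ≤ (ν + n + 1) * Real.Gamma (ν + n + 1) :=
        le_mul_of_one_le_left (Real.Gamma_pos_of_pos h1).le (by linarith)

lemma summable_aux (ν t : ℝ) (hν : 0 < ν) (ht : 1 ≤ t) :
    Summable (fun j : ℕ => ((2*t)⁻¹)^j / Real.Gamma (ν + j + 1)) := by
  have h2t : (0:ℝ) < 2 * t := by linarith
  refine Summable.of_nonneg_of_le (fun j => ?_) (fun j => ?_)
    ((summable_geometric_of_lt_one (by norm_num) (by norm_num : (1/2:ℝ) < 1)).mul_left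
      (Real.Gamma (ν + 1))⁻¹)
  · exact div_nonneg (pow_nonneg (inv_nonneg.2 h2t.le) j)
      (Real.Gamma_pos_of_pos (by positivity)).le
  · have h1 : ((2*t)⁻¹)^j ≤ (1/2:ℝ)^j := by
      refine pow_le_pow_left₀ (inv_nonneg.2 h2t.le) ?_ j
      rw [one_div]
      exact inv_anti₀ (by norm_num) (by linarith)
    have h2 : (Real.Gamma (ν + j + 1))⁻¹ ≤ (Real.Gamma (ν + 1))⁻¹ :=
      inv_anti₀ (Real.Gamma_pos_of_pos (by linarith)) (Gamma_nu_le ν hν j)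
    calc ((2*t)⁻¹)^j / Real.Gamma (ν + j + 1)
        = ((2*t)⁻¹)^j * (Real.Gamma (ν + j + 1))⁻¹ := div_eq_mul_inv _ _
      _ ≤ (1/2:ℝ)^j * (Real.Gamma (ν + 1))⁻¹ := by
          exact mul_le_mul h1 h2 (inv_nonneg.2 (Real.Gamma_pos_of_pos (by positivity)).le)
            (by positivity)
      _ = (Real.Gamma (ν + 1))⁻¹ * (1/2:ℝ)^j := mul_comm _ _

lemma key (ν t : ℝ) (hν : 0 < ν) (ht : 1 ≤ t) :
    t ^ ν * rhoNu ν t =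
      Real.exp (-1/(2*t)) * (2:ℝ) ^ (-ν) *
        ∑' j : ℕ, ((2*t)⁻¹)^j / Real.Gamma (ν + j + 1) := by
  have ht0 : (0:ℝ) < t := lt_of_lt_of_le one_pos ht
  have h2t : (0:ℝ) < 2 * t := by linarith
  set b : ℝ := (2*t)⁻¹ with hb
  have hb0 : 0 < b := inv_pos.2 h2t
  set C : ℕ → ℝ := fun j =>
    Real.exp (-1/(2*t)) * (2*t) ^ (-(ν + 2*(j:ℝ))) /
      ((Nat.factorial j : ℝ) * Real.Gamma (ν + (j:ℝ) + 1)) with hC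
  set F : ℕ → ℝ → ℝ := fun j y => C j * (y ^ ((1:ℝ) + 2*(j:ℝ)) * Real.exp (-b * y ^ 2)) with hF
  have hCpos : ∀ j, 0 < C j := fun j => by
    refine div_pos (mul_pos (Real.exp_pos _) (Real.rpow_pos_of_pos h2t _)) (mul_pos ?_ ?_)
    · exact_mod_cast Nat.factorial_pos j
    · exact Real.Gamma_pos_of_pos (by positivity)
  -- pointwise expansion
  have hpt : ∀ y ∈ Ioi (0:ℝ),
      y ^ (1 - ν) * Real.exp (-(1 + y ^ 2) / (2 * t)) * besselI ν (y / t)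
        = ∑' j : ℕ, F j y := by
    intro y hy
    rw [mem_Ioi] at hy
    rw [besselI, ← tsum_mul_left]
    refine tsum_congr fun j => ?_
    have f1 : y / t / 2 = y * (2*t)⁻¹ := by ring
    have f2 : (y * (2*t)⁻¹) ^ (ν + 2*(j:ℝ))
        = y ^ (ν + 2*(j:ℝ)) * (2*t) ^ (-(ν + 2*(j:ℝ))) := by
      rw [Real.mul_rpow hy.le (inv_nonneg.2 h2t.le), Real.inv_rpow h2t.le,
        ← Real.rpow_neg h2t.le]
    have f3 : y ^ (1 - ν) * y ^ (ν + 2*(j:ℝ)) = y ^ ((1:ℝ) + 2*(j:ℝ)) := by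
      rw [← Real.rpow_add hy, show (1 - ν) + (ν + 2*(j:ℝ)) = (1:ℝ) + 2*(j:ℝ) by ring]
    have f4 : Real.exp (-(1 + y ^ 2) / (2 * t))
        = Real.exp (-1/(2*t)) * Real.exp (-b * y ^ 2) := by
      rw [← Real.exp_add]
      congr 1
      rw [hb]
      field_simp
      ring
    rw [f1, f2, f4]
    simp only [hF, hC]
    field_simp
    rw [← f3]
  have hInt : ∀ j : ℕ, IntegrableOn (F j) (Ioi (0:ℝ)) := by
    intro j
    have hq : (-1:ℝ) < 1 + 2*(j:ℝ) := by
      have : (0:ℝ) ≤ j := Nat.cast_nonneg j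
      linarith
    exact (integrableOn_rpow_mul_exp_neg_mul_sq hb0 hq).const_mul _
  -- value of each integral
  have hA : ∀ j : ℕ, b ^ (-((1:ℝ) + 2*(j:ℝ) + 1)/2) = (2*t) ^ ((j:ℝ)+1) := by
    intro j
    rw [show (-((1:ℝ) + 2*(j:ℝ) + 1)/2) = -((j:ℝ)+1) by ring, hb,
      Real.inv_rpow h2t.le, Real.rpow_neg h2t.le, inv_inv]
  have hG : ∀ j : ℕ, Real.Gamma (((1:ℝ) + 2*(j:ℝ) + 1)/2) = (Nat.factorial j : ℝ) := by
    intro j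
    rw [show ((1:ℝ) + 2*(j:ℝ) + 1)/2 = (j:ℝ) + 1 by ring]
    exact_mod_cast Real.Gamma_nat_eq_factorial j
  have hval : ∀ j : ℕ, ∫ y in Ioi (0:ℝ), F j y
      = C j * ((2*t) ^ ((j:ℝ)+1) * (1/2) * (Nat.factorial j : ℝ)) := by
    intro j
    rw [hF]
    simp only []
    rw [MeasureTheory.integral_const_mul]
    congr 1
    have : ∀ y : ℝ, y ^ ((1:ℝ) + 2*(j:ℝ)) * Real.exp (-b * y ^ 2)
        = y ^ ((1:ℝ) + 2*(j:ℝ)) * Real.exp (-b * y ^ (2:ℝ)) := by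
      intro y; rw [Real.rpow_two]
    simp_rw [this]
    rw [integral_rpow_mul_exp_neg_mul_rpow two_pos (by
      have : (0:ℝ) ≤ j := Nat.cast_nonneg j
      linarith) hb0]
    rw [hA j, hG j]
  -- (2t)^(-j) = b^j
  have hbj : ∀ j : ℕ, (2*t) ^ (-(j:ℝ)) = b ^ j := by
    intro j
    rw [hb, inv_pow, Real.rpow_neg h2t.le, Real.rpow_natCast]
  -- the master termwise identity
  have hpos : 0 < t ^ ν * (1/t) := mul_pos (Real.rpow_pos_of_pos ht0 ν) (one_div_pos.2 ht0)
  have hmain : ∀ j : ℕ,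
      (t ^ ν * (1/t)) * (C j * ((2*t) ^ ((j:ℝ)+1) * (1/2) * (Nat.factorial j : ℝ)))
        = (Real.exp (-1/(2*t)) * (2:ℝ) ^ (-ν)) * (b ^ j / Real.Gamma (ν + (j:ℝ) + 1)) := by
    intro j
    have hfj : (0:ℝ) < (Nat.factorial j : ℝ) := by exact_mod_cast Nat.factorial_pos j
    have hΓ : (0:ℝ) < Real.Gamma (ν + (j:ℝ) + 1) := Real.Gamma_pos_of_pos (by positivity)
    have e1 : (2*t) ^ (-(ν + 2*(j:ℝ))) * (2*t) ^ ((j:ℝ)+1)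
        = (2*t) ^ ((1:ℝ) - ν) * (2*t) ^ (-(j:ℝ)) := by
      rw [← Real.rpow_add h2t, ← Real.rpow_add h2t]
      congr 1
      ring
    have e2 : t ^ ν * (1/t) * (2*t) ^ ((1:ℝ)-ν) = (2:ℝ) ^ ((1:ℝ)-ν) := by
      rw [Real.mul_rpow (by norm_num : (0:ℝ) ≤ 2) ht0.le, one_div, ← Real.rpow_neg_one t,
        show t ^ ν * t ^ (-1:ℝ) * ((2:ℝ)^((1:ℝ)-ν) * t^((1:ℝ)-ν))
          = (2:ℝ)^((1:ℝ)-ν) * (t^ν * t^(-1:ℝ) * t^((1:ℝ)-ν)) from by ring,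
        ← Real.rpow_add ht0, ← Real.rpow_add ht0,
        show ν + (-1:ℝ) + (1-ν) = 0 by ring, Real.rpow_zero, mul_one]
    have e3 : (2:ℝ)^((1:ℝ)-ν) * (1/2) = (2:ℝ)^(-ν) := by
      rw [show (1:ℝ)-ν = -ν + 1 by ring, Real.rpow_add (by norm_num : (0:ℝ) < 2),
        Real.rpow_one]
      ring
    calc (t ^ ν * (1/t)) * (C j * ((2*t) ^ ((j:ℝ)+1) * (1/2) * (Nat.factorial j : ℝ)))
        = (t^ν*(1/t)) * (Real.exp (-1/(2*t)) * ((2*t) ^ (-(ν + 2*(j:ℝ))) * (2*t) ^ ((j:ℝ)+1))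
            * (1/2) * ((Nat.factorial j : ℝ)/((Nat.factorial j : ℝ) * Real.Gamma (ν + (j:ℝ) + 1)))) := by
          rw [hC]; ring
      _ = (t^ν*(1/t)) * (Real.exp (-1/(2*t)) * ((2*t) ^ ((1:ℝ)-ν) * (2*t) ^ (-(j:ℝ)))
            * (1/2) * ((Nat.factorial j : ℝ)/((Nat.factorial j : ℝ) * Real.Gamma (ν + (j:ℝ) + 1)))) := by
          rw [e1]
      _ = Real.exp (-1/(2*t)) * ((t^ν*(1/t) * (2*t) ^ ((1:ℝ)-ν)) * (1/2))
            * ((2*t) ^ (-(j:ℝ)) * ((Nat.factorial j : ℝ)/((Nat.factorial j : ℝ) * Real.Gamma (ν + (j:ℝ) + 1)))) := by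
          ring
      _ = Real.exp (-1/(2*t)) * ((2:ℝ)^((1:ℝ)-ν) * (1/2))
            * (b ^ j * ((Nat.factorial j : ℝ)/((Nat.factorial j : ℝ) * Real.Gamma (ν + (j:ℝ) + 1)))) := by
          rw [e2, hbj]
      _ = (Real.exp (-1/(2*t)) * (2:ℝ) ^ (-ν)) * (b ^ j / Real.Gamma (ν + (j:ℝ) + 1)) := by
          rw [e3]
          rw [show ((Nat.factorial j : ℝ)/((Nat.factorial j : ℝ) * Real.Gamma (ν + (j:ℝ) + 1)))
            = (Real.Gamma (ν + (j:ℝ) + 1))⁻¹ from by field_simp]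
          rw [div_eq_mul_inv]
          ring
  -- interchange
  have hswap : (∫ y in Ioi (0:ℝ),
        y ^ (1 - ν) * Real.exp (-(1 + y ^ 2) / (2 * t)) * besselI ν (y / t))
      = ∑' j : ℕ, ∫ y in Ioi (0:ℝ), F j y := by
    rw [setIntegral_congr_fun measurableSet_Ioi hpt]
    refine (MeasureTheory.integral_tsum_of_summable_integral_norm (fun j => hInt j) ?_).symm
    have hnorm : ∀ j : ℕ, (∫ y in Ioi (0:ℝ), ‖F j y‖) = ∫ y in Ioi (0:ℝ), F j y := by
      intro j
      refine setIntegral_congr_fun measurableSet_Ioi fun y hy => ?_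
      rw [mem_Ioi] at hy
      rw [Real.norm_eq_abs, abs_of_nonneg]
      exact mul_nonneg (hCpos j).le
        (mul_nonneg (Real.rpow_nonneg hy.le _) (Real.exp_pos _).le)
    simp_rw [hnorm, hval]
    have hsum2 : Summable (fun j : ℕ =>
        (t ^ ν * (1/t)) * (C j * ((2*t) ^ ((j:ℝ)+1) * (1/2) * (Nat.factorial j : ℝ)))) := by
      refine Summable.congr (((summable_aux ν t hν ht).mul_left
        (Real.exp (-1/(2*t)) * (2:ℝ) ^ (-ν)))) fun j => (hmain j).symm
    exact (summable_mul_left_iff hpos.ne').mp hsum2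
  simp only [rhoNu]
  rw [hswap, ← mul_assoc, ← tsum_mul_left, ← tsum_mul_left]
  refine tsum_congr fun j => ?_
  rw [hval j]
  exact hmain j

lemma tendsto_S (ν : ℝ) (hν : 0 < ν) :
    Tendsto (fun t : ℝ => ∑' j : ℕ, ((2*t)⁻¹)^j / Real.Gamma (ν + j + 1)) atTop
      (𝓝 (Real.Gamma (ν + 1))⁻¹) := by
  have hΓ1 : (0:ℝ) < Real.Gamma (ν + 1) := Real.Gamma_pos_of_pos (by linarith)
  -- tail sums
  set T : ℝ → ℝ := fun t => ∑' j : ℕ, ((2*t)⁻¹)^(j+1) / Real.Gamma (ν + (((j:ℕ)+1:ℕ):ℝ) + 1)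
    with hT
  have hsplit : ∀ t : ℝ, 1 ≤ t →
      (∑' j : ℕ, ((2*t)⁻¹)^j / Real.Gamma (ν + j + 1)) = (Real.Gamma (ν+1))⁻¹ + T t := by
    intro t ht
    rw [Summable.tsum_eq_zero_add (summable_aux ν t hν ht)]
    congr 1
    simp
  have hTtail : ∀ t : ℝ, 1 ≤ t → Summable (fun j : ℕ =>
      ((2*t)⁻¹)^(j+1) / Real.Gamma (ν + (((j:ℕ)+1:ℕ):ℝ) + 1)) := by
    intro t ht
    exact (summable_nat_add_iff 1).2 (summable_aux ν t hν ht)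
  have hTbound : ∀ t : ℝ, 1 ≤ t → T t ≤ (2*t)⁻¹ * ((Real.Gamma (ν+1))⁻¹ * 2) := by
    intro t ht
    have h2t : (0:ℝ) < 2*t := by linarith
    have hle : ∀ j : ℕ, ((2*t)⁻¹)^(j+1) / Real.Gamma (ν + (((j:ℕ)+1:ℕ):ℝ) + 1)
        ≤ (2*t)⁻¹ * ((Real.Gamma (ν+1))⁻¹ * (1/2)^j) := by
      intro j
      have h1 : ((2*t)⁻¹)^(j+1) ≤ (2*t)⁻¹ * (1/2)^j := by
        rw [pow_succ']
        refine mul_le_mul_of_nonneg_left ?_ (inv_nonneg.2 h2t.le)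
        refine pow_le_pow_left₀ (inv_nonneg.2 h2t.le) ?_ j
        rw [one_div]
        exact inv_anti₀ (by norm_num) (by linarith)
      have h2 : (Real.Gamma (ν + (((j:ℕ)+1:ℕ):ℝ) + 1))⁻¹ ≤ (Real.Gamma (ν + 1))⁻¹ :=
        inv_anti₀ hΓ1 (Gamma_nu_le ν hν (j+1))
      calc ((2*t)⁻¹)^(j+1) / Real.Gamma (ν + (((j:ℕ)+1:ℕ):ℝ) + 1)
          = ((2*t)⁻¹)^(j+1) * (Real.Gamma (ν + (((j:ℕ)+1:ℕ):ℝ) + 1))⁻¹ := div_eq_mul_inv _ _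
        _ ≤ ((2*t)⁻¹ * (1/2)^j) * (Real.Gamma (ν + 1))⁻¹ := by
            refine mul_le_mul h1 h2 (inv_nonneg.2 (Real.Gamma_pos_of_pos (by positivity)).le)
              (by positivity)
        _ = (2*t)⁻¹ * ((Real.Gamma (ν+1))⁻¹ * (1/2)^j) := by ring
    have hsumR : Summable (fun j : ℕ => (2*t)⁻¹ * ((Real.Gamma (ν+1))⁻¹ * (1/2:ℝ)^j)) :=
      (((summable_geometric_of_lt_one (by norm_num) (by norm_num : (1/2:ℝ) < 1)).mul_left
        _).mul_left _)
    calc T t ≤ ∑' j : ℕ, (2*t)⁻¹ * ((Real.Gamma (ν+1))⁻¹ * (1/2:ℝ)^j) :=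
          Summable.tsum_le_tsum hle (hTtail t ht) hsumR
      _ = (2*t)⁻¹ * ((Real.Gamma (ν+1))⁻¹ * ∑' j : ℕ, (1/2:ℝ)^j) := by
          rw [tsum_mul_left, tsum_mul_left]
      _ = (2*t)⁻¹ * ((Real.Gamma (ν+1))⁻¹ * 2) := by
          rw [tsum_geometric_of_lt_one (by norm_num) (by norm_num)]
          norm_num
  have hT0 : Tendsto T atTop (𝓝 0) := by
    refine squeeze_zero' (g := fun t => (2*t)⁻¹ * ((Real.Gamma (ν+1))⁻¹ * 2)) ?_ ?_ ?_
    · filter_upwards [eventually_ge_atTop (1:ℝ)] with t ht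
      refine tsum_nonneg fun j => div_nonneg (by positivity) ?_
      · have h2t : (0:ℝ) < 2*t := by linarith
        exact (Real.Gamma_pos_of_pos (by positivity)).le
    · filter_upwards [eventually_ge_atTop (1:ℝ)] with t ht using hTbound t ht
    · have h1 : Tendsto (fun t : ℝ => (2*t)⁻¹) atTop (𝓝 0) :=
        tendsto_inv_atTop_zero.comp (tendsto_id.const_mul_atTop two_pos)
      simpa using h1.mul_const ((Real.Gamma (ν+1))⁻¹ * 2)
  have := (tendsto_const_nhds (x := (Real.Gamma (ν+1))⁻¹) (f := atTop)).add hT0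
  rw [add_zero] at this
  refine Tendsto.congr' ?_ this
  filter_upwards [eventually_ge_atTop (1:ℝ)] with t ht using (hsplit t ht).symm


theorem stmt_11 (ν : ℝ) (hν : 0 < ν) :
    Filter.Tendsto (fun t : ℝ => t ^ ν * rhoNu ν t) Filter.atTop
      (nhds (1 / ((2:ℝ) ^ ν * Real.Gamma (1 + ν)))) := by
  have h1 : Tendsto (fun t : ℝ => Real.exp (-1/(2*t))) atTop (𝓝 1) := by
    have h0 : Tendsto (fun t : ℝ => -1/(2*t)) atTop (𝓝 0) :=
      tendsto_const_nhds.div_atTop (tendsto_id.const_mul_atTop two_pos)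
    have := (Real.continuous_exp.tendsto 0).comp h0
    simpa [Function.comp_def] using this
  have h2 := (h1.mul (tendsto_const_nhds (x := (2:ℝ)^(-ν)))).mul (tendsto_S ν hν)
  have hlim : (1:ℝ) * (2:ℝ)^(-ν) * (Real.Gamma (ν+1))⁻¹
      = 1 / ((2:ℝ)^ν * Real.Gamma (1+ν)) := by
    rw [one_mul, one_div, mul_inv, Real.rpow_neg (by norm_num : (0:ℝ) ≤ 2), add_comm 1 ν]
  rw [← hlim]
  refine Tendsto.congr' ?_ h2
  filter_upwards [eventually_ge_atTop (1:ℝ)] with t ht using (key ν t hν ht).symm
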